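/- A linear-fractional minimization problem min (aᵀx + b)/(cᵀx + d) over a polyhedron {x : Gx ≤ h} on which cᵀx + d > 0 attains the same optimal value as the linear program min aᵀy + b·t subject to Gy ≤ h·t, cᵀy + d·t = 1, t ≥ 0, via the Charnes–Cooper transformation y = x/(cᵀx+d), t = 1/(cᵀx+d), provided the polyhedron is nonempty and bounded. -/

import Mathlib

open Matrix

/-- Charnes–Cooper equivalence: a linear-fractional minimization over a
nonempty compact polyhedron on which the denominator is positive has the
same optimal value as the associated linear program in variables `(y, t)`. -/
theorem charnes_cooper {n m : ℕ} (a c : Fin n → ℝ) (b d : ℝ)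
    (G : Matrix (Fin m) (Fin n) ℝ) (h : Fin m → ℝ)
    (hne : {x : Fin n → ℝ | ∀ i, G.mulVec x i ≤ h i}.Nonempty)
    (hcpt : IsCompact {x : Fin n → ℝ | ∀ i, G.mulVec x i ≤ h i})
    (hden : ∀ x ∈ {x : Fin n → ℝ | ∀ i, G.mulVec x i ≤ h i},
      0 < c ⬝ᵥ x + d) :
    sInf {v : ℝ | ∃ x, (∀ i, G.mulVec x i ≤ h i) ∧
        v = (a ⬝ᵥ x + b) / (c ⬝ᵥ x + d)} =
    sInf {v : ℝ | ∃ y : Fin n → ℝ, ∃ t : ℝ, 0 ≤ t ∧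
        (∀ i, G.mulVec y i ≤ h i * t) ∧ c ⬝ᵥ y + d * t = 1 ∧
        v = a ⬝ᵥ y + b * t} := by
  congr 1
  ext v
  constructor
  · rintro ⟨x, hx, rfl⟩
    have hpos : 0 < c ⬝ᵥ x + d := hden x hx
    set t : ℝ := (c ⬝ᵥ x + d)⁻¹ with ht
    have htpos : 0 < t := inv_pos.mpr hpos
    refine ⟨t • x, t, htpos.le, ?_, ?_, ?_⟩
    · intro i
      rw [mulVec_smul]
      have := hx i
      calc (t • G.mulVec x) i = t * G.mulVec x i := rfl
        _ ≤ t * h i := by nlinarith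
        _ = h i * t := mul_comm _ _
    · rw [dotProduct_smul, smul_eq_mul, ht]
      field_simp [hpos.ne']
    · rw [dotProduct_smul, smul_eq_mul, ht]
      field_simp [hpos.ne']
  · rintro ⟨y, t, ht, hy, hct, rfl⟩
    rcases eq_or_lt_of_le ht with heq | hpos
    · exfalso
      obtain ⟨x₀, hx₀⟩ := hne
      have hcy : c ⬝ᵥ y = 1 := by
        rw [← heq] at hct; linarith [hct]
      have hGy : ∀ i, G.mulVec y i ≤ 0 := by
        intro i; have := hy i; rw [← heq] at this; linarith
      have hcont : Continuous fun x : Fin n → ℝ => c ⬝ᵥ x + d := by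
        unfold dotProduct
        continuity
      obtain ⟨M, hM⟩ := (hcpt.image hcont).bddAbove
      have hM₀ : c ⬝ᵥ x₀ + d ≤ M := hM ⟨x₀, hx₀, rfl⟩
      set s : ℝ := M - (c ⬝ᵥ x₀ + d) + 1 with hs
      have hs0 : 0 ≤ s := by linarith
      have hmem : x₀ + s • y ∈ {x : Fin n → ℝ | ∀ i, G.mulVec x i ≤ h i} := by
        intro i
        rw [mulVec_add, mulVec_smul]
        have := hGy i
        have : s * G.mulVec y i ≤ 0 := mul_nonpos_of_nonneg_of_nonpos hs0 this
        have hxi := hx₀ i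
        calc G.mulVec x₀ i + (s • G.mulVec y) i
            = G.mulVec x₀ i + s * G.mulVec y i := rfl
          _ ≤ h i := by linarith
      have hval : c ⬝ᵥ (x₀ + s • y) + d = M + 1 := by
        rw [dotProduct_add, dotProduct_smul, smul_eq_mul, hcy]
        linarith
      have h2 : c ⬝ᵥ (x₀ + s • y) + d ≤ M := hM ⟨_, hmem, rfl⟩
      linarith
    · refine ⟨t⁻¹ • y, ?_, ?_⟩
      · intro i
        rw [mulVec_smul]
        have := hy i
        calc (t⁻¹ • G.mulVec y) i = t⁻¹ * G.mulVec y i := rfl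
          _ ≤ t⁻¹ * (h i * t) := by
              apply mul_le_mul_of_nonneg_left this (inv_nonneg.mpr hpos.le)
          _ = h i := by field_simp
      · rw [dotProduct_smul, dotProduct_smul, smul_eq_mul, smul_eq_mul]
        have hd2 : t⁻¹ * (c ⬝ᵥ y) + d = t⁻¹ := by
          field_simp
          linarith
        rw [hd2, div_inv_eq_mul]
        field_simp
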